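/- arXiv:2506.15141 — 8 statements merged into one kernel-verified Lean document; each statement's English description precedes it below -/
import Mathlib

section
/- There do not exist complex numbers a₁, a₂, a₃, a₁₂, a₁₃, a₂₃ and a real number c > 0 such that for all (z₁, z₂, z₃) ∈ ℂ³, setting ℓ₁ = a₁ − a₁₂z₂ − a₁₃z₃, ℓ₂ = a₂ + a₁₂z₁ − a₂₃z₃, ℓ₃ = a₃ + a₁₃z₁ + a₂₃z₂, one has |ℓ₁|² + |ℓ₂|² + |ℓ₃|² + |ℓ₁·conj(z₁) + ℓ₂·conj(z₂) + ℓ₃·conj(z₃)|² = c·(1 + |z₁|² + |z₂|² + |z₃|²). -/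
open Complex

/-- There do not exist complex numbers `a₁, a₂, a₃, a₁₂, a₁₃, a₂₃` and a real `c > 0` such that
for all `(z₁, z₂, z₃) ∈ ℂ³`, with `ℓ₁ = a₁ − a₁₂z₂ − a₁₃z₃`, `ℓ₂ = a₂ + a₁₂z₁ − a₂₃z₃`,
`ℓ₃ = a₃ + a₁₃z₁ + a₂₃z₂`, one has
`|ℓ₁|² + |ℓ₂|² + |ℓ₃|² + |ℓ₁ z̄₁ + ℓ₂ z̄₂ + ℓ₃ z̄₃|² = c (1 + |z₁|² + |z₂|² + |z₃|²)`. -/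
theorem no_constant_norm_section :
    ¬ ∃ (a₁ a₂ a₃ a₁₂ a₁₃ a₂₃ : ℂ) (c : ℝ), 0 < c ∧
      ∀ z₁ z₂ z₃ : ℂ,
        (‖a₁ - a₁₂ * z₂ - a₁₃ * z₃‖) ^ 2
        + (‖a₂ + a₁₂ * z₁ - a₂₃ * z₃‖) ^ 2
        + (‖a₃ + a₁₃ * z₁ + a₂₃ * z₂‖) ^ 2
        + (‖(a₁ - a₁₂ * z₂ - a₁₃ * z₃) * (starRingEnd ℂ z₁)
            + (a₂ + a₁₂ * z₁ - a₂₃ * z₃) * (starRingEnd ℂ z₂)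
            + (a₃ + a₁₃ * z₁ + a₂₃ * z₂) * (starRingEnd ℂ z₃)‖) ^ 2
        = c * (1 + (‖z₁‖) ^ 2 + (‖z₂‖) ^ 2 + (‖z₃‖) ^ 2) := by
  rintro ⟨a₁, a₂, a₃, a₁₂, a₁₃, a₂₃, c, hc, h⟩
  have h12 : a₁₂ = 0 := by
    have e0 := h 0 0 0
    have e1 := h 1 I 0
    have e1' := h (-1) (-I) 0
    have e2 := h 2 (2*I) 0
    have e2' := h (-2) (-(2*I)) 0
    rw [← Complex.normSq_eq_zero]
    simp only [Complex.sq_norm, Complex.normSq_apply, Complex.add_re, Complex.add_im,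
      Complex.sub_re, Complex.sub_im, Complex.mul_re, Complex.mul_im, Complex.I_re,
      Complex.I_im, Complex.conj_re, Complex.conj_im, Complex.neg_re, Complex.neg_im,
      Complex.one_re, Complex.one_im, Complex.zero_re, Complex.zero_im,
      Complex.re_ofNat, Complex.im_ofNat] at e0 e1 e1' e2 e2' ⊢
    linear_combination (e2 + e2' - 4*e1 - 4*e1' + 6*e0) / 96
  have h13 : a₁₃ = 0 := by
    have e0 := h 0 0 0
    have e1 := h 1 0 I
    have e1' := h (-1) 0 (-I)
    have e2 := h 2 0 (2*I)
    have e2' := h (-2) 0 (-(2*I))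
    rw [← Complex.normSq_eq_zero]
    simp only [Complex.sq_norm, Complex.normSq_apply, Complex.add_re, Complex.add_im,
      Complex.sub_re, Complex.sub_im, Complex.mul_re, Complex.mul_im, Complex.I_re,
      Complex.I_im, Complex.conj_re, Complex.conj_im, Complex.neg_re, Complex.neg_im,
      Complex.one_re, Complex.one_im, Complex.zero_re, Complex.zero_im,
      Complex.re_ofNat, Complex.im_ofNat] at e0 e1 e1' e2 e2' ⊢
    linear_combination (e2 + e2' - 4*e1 - 4*e1' + 6*e0) / 96
  have h23 : a₂₃ = 0 := by
    have e0 := h 0 0 0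
    have e1 := h 0 1 I
    have e1' := h 0 (-1) (-I)
    have e2 := h 0 2 (2*I)
    have e2' := h 0 (-2) (-(2*I))
    rw [← Complex.normSq_eq_zero]
    simp only [Complex.sq_norm, Complex.normSq_apply, Complex.add_re, Complex.add_im,
      Complex.sub_re, Complex.sub_im, Complex.mul_re, Complex.mul_im, Complex.I_re,
      Complex.I_im, Complex.conj_re, Complex.conj_im, Complex.neg_re, Complex.neg_im,
      Complex.one_re, Complex.one_im, Complex.zero_re, Complex.zero_im,
      Complex.re_ofNat, Complex.im_ofNat] at e0 e1 e1' e2 e2' ⊢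
    linear_combination (e2 + e2' - 4*e1 - 4*e1' + 6*e0) / 96
  subst h12 h13 h23
  have e0 := h 0 0 0
  have e1 := h 1 0 0
  have e2 := h 0 1 0
  have e3 := h 0 0 1
  simp only [Complex.sq_norm, Complex.normSq_apply, Complex.add_re, Complex.add_im,
    Complex.sub_re, Complex.sub_im, Complex.mul_re, Complex.mul_im,
    Complex.conj_re, Complex.conj_im, Complex.neg_re, Complex.neg_im,
    Complex.one_re, Complex.one_im, Complex.zero_re, Complex.zero_im] at e0 e1 e2 e3
  linarith
end

section
/- For all X = (X₁, X₂, X₃) and Y = (Y₁, Y₂, Y₃) in ℂ³, one has 2(|X₁Y₁|² + |X₂Y₂|² + |X₃Y₃|²) + |X₂Y₁|² + |X₂Y₃|² + 2Re(X₁·conj(X₂)·conj(Y₁)·Y₂) + 2Re(X₂·conj(X₃)·conj(Y₂)·Y₃) − 2Re(X₁·conj(X₃)·conj(Y₁)·Y₃) = |X₂Y₁|² + |X₂Y₃|² + |X₁·conj(Y₁) + X₂·conj(Y₂)|² + |X₁·conj(Y₁) − X₃·conj(Y₃)|² + |X₂·conj(Y₂) + X₃·conj(Y₃)|²; in particular the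 left-hand side is nonnegative. -/
open Complex

/-- The Chern bisectional curvature of the Wallach threefold is a sum of squares, hence
nonnegative. -/
theorem wallach_bisectional_curvature (X Y : Fin 3 → ℂ) :
    2 * ((‖(X 0 * Y 0)‖) ^ 2 + (‖(X 1 * Y 1)‖) ^ 2
        + (‖(X 2 * Y 2)‖) ^ 2)
      + (‖(X 1 * Y 0)‖) ^ 2 + (‖(X 1 * Y 2)‖) ^ 2
      + 2 * (X 0 * (starRingEnd ℂ (X 1)) * (starRingEnd ℂ (Y 0)) * Y 1).re
      + 2 * (X 1 * (starRingEnd ℂ (X 2)) * (starRingEnd ℂ (Y 1)) * Y 2).re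
      - 2 * (X 0 * (starRingEnd ℂ (X 2)) * (starRingEnd ℂ (Y 0)) * Y 2).re
    = (‖(X 1 * Y 0)‖) ^ 2 + (‖(X 1 * Y 2)‖) ^ 2
      + (‖(X 0 * (starRingEnd ℂ (Y 0)) + X 1 * (starRingEnd ℂ (Y 1)))‖) ^ 2
      + (‖(X 0 * (starRingEnd ℂ (Y 0)) - X 2 * (starRingEnd ℂ (Y 2)))‖) ^ 2
      + (‖(X 1 * (starRingEnd ℂ (Y 1)) + X 2 * (starRingEnd ℂ (Y 2)))‖) ^ 2
    ∧ 0 ≤ 2 * ((‖(X 0 * Y 0)‖) ^ 2 + (‖(X 1 * Y 1)‖) ^ 2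
        + (‖(X 2 * Y 2)‖) ^ 2)
      + (‖(X 1 * Y 0)‖) ^ 2 + (‖(X 1 * Y 2)‖) ^ 2
      + 2 * (X 0 * (starRingEnd ℂ (X 1)) * (starRingEnd ℂ (Y 0)) * Y 1).re
      + 2 * (X 1 * (starRingEnd ℂ (X 2)) * (starRingEnd ℂ (Y 1)) * Y 2).re
      - 2 * (X 0 * (starRingEnd ℂ (X 2)) * (starRingEnd ℂ (Y 0)) * Y 2).re := by
  have key : ∀ a b c d e f : ℂ,
      2 * ((‖(a * d)‖) ^ 2 + (‖(b * e)‖) ^ 2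
        + (‖(c * f)‖) ^ 2)
      + (‖(b * d)‖) ^ 2 + (‖(b * f)‖) ^ 2
      + 2 * (a * (starRingEnd ℂ b) * (starRingEnd ℂ d) * e).re
      + 2 * (b * (starRingEnd ℂ c) * (starRingEnd ℂ e) * f).re
      - 2 * (a * (starRingEnd ℂ c) * (starRingEnd ℂ d) * f).re
    = (‖(b * d)‖) ^ 2 + (‖(b * f)‖) ^ 2
      + (‖(a * (starRingEnd ℂ d) + b * (starRingEnd ℂ e))‖) ^ 2
      + (‖(a * (starRingEnd ℂ d) - c * (starRingEnd ℂ f))‖) ^ 2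
      + (‖(b * (starRingEnd ℂ e) + c * (starRingEnd ℂ f))‖) ^ 2 := by
    intro a b c d e f
    simp only [Complex.sq_norm, Complex.normSq_apply, Complex.mul_re, Complex.mul_im,
      Complex.add_re, Complex.add_im, Complex.sub_re, Complex.sub_im,
      Complex.conj_re, Complex.conj_im]
    ring
  have h := key (X 0) (X 1) (X 2) (Y 0) (Y 1) (Y 2)
  refine ⟨h, ?_⟩
  rw [h]
  positivity
end

section
/- For all X = (X₁, X₂, X₃) ∈ ℂ³ one has 2(|X₁|⁴ + |X₂|⁴ + |X₃|⁴) + 3|X₁X₂|² + 3|X₂X₃|² − 2|X₁X₃|² = |X₁X₂|² + |X₂X₃|² + (|X₁|² + |X₂|²)² + (|X₁|² − |X₃|²)² + (|X₂|² + |X₃|²)², and this quantity is strictly positive whenever X ≠ 0. -/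
open Complex

/-- The Chern holomorphic sectional curvature of the Wallach threefold is a sum of squares,
and is strictly positive for `X ≠ 0`. -/
theorem wallach_holomorphic_sectional_curvature (X : Fin 3 → ℂ) :
    2 * ((‖X 0‖) ^ 4 + (‖X 1‖) ^ 4 + (‖X 2‖) ^ 4)
      + 3 * (‖X 0 * X 1‖) ^ 2 + 3 * (‖X 1 * X 2‖) ^ 2
      - 2 * (‖X 0 * X 2‖) ^ 2
    = (‖X 0 * X 1‖) ^ 2 + (‖X 1 * X 2‖) ^ 2
      + ((‖X 0‖) ^ 2 + (‖X 1‖) ^ 2) ^ 2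
      + ((‖X 0‖) ^ 2 - (‖X 2‖) ^ 2) ^ 2
      + ((‖X 1‖) ^ 2 + (‖X 2‖) ^ 2) ^ 2
    ∧ (X ≠ 0 →
      0 < 2 * ((‖X 0‖) ^ 4 + (‖X 1‖) ^ 4 + (‖X 2‖) ^ 4)
        + 3 * (‖X 0 * X 1‖) ^ 2 + 3 * (‖X 1 * X 2‖) ^ 2
        - 2 * (‖X 0 * X 2‖) ^ 2) := by
  simp only [norm_mul]
  set a := ‖X 0‖ with ha
  set b := ‖X 1‖ with hb
  set c := ‖X 2‖ with hc
  constructor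
  · ring
  · intro hX
    have h : a ≠ 0 ∨ b ≠ 0 ∨ c ≠ 0 := by
      by_contra h
      push_neg at h
      apply hX
      funext i
      fin_cases i
      · simpa [ha] using norm_eq_zero.mp h.1
      · simpa [hb] using norm_eq_zero.mp h.2.1
      · simpa [hc] using norm_eq_zero.mp h.2.2
    have ha0 : 0 ≤ a := norm_nonneg _
    have hb0 : 0 ≤ b := norm_nonneg _
    have hc0 : 0 ≤ c := norm_nonneg _
    rcases h with h | h | h <;>
      [have hp := pow_pos (ha0.lt_of_ne (Ne.symm h)) 4;
       have hp := pow_pos (hb0.lt_of_ne (Ne.symm h)) 4;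
       have hp := pow_pos (hc0.lt_of_ne (Ne.symm h)) 4] <;>
      nlinarith [sq_nonneg (a*b), sq_nonneg (b*c), sq_nonneg (a^2-c^2), sq_nonneg (a^2+b^2), sq_nonneg (b^2+c^2)]
end

section
/- For all complex numbers u, v, p, q: |up|² − Re(u²·conj(p)²) + |vq|² − Re(v²·conj(q)²) + (1/4)(|uq|² + |vp|²) − (5/2)·Re(u·conj(v)·conj(p)·q) + 2·Re(u·v·conj(p)·conj(q)) = 2·(Im(u·conj(p)) − Im(v·conj(q)))² + (1/4)·|uq − vp|². In particular the left-hand side is nonnegative. -/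
open Complex

/-- Sum-of-squares identity for the term `F₁₃` in the Riemannian sectional curvature of the
Wallach threefold; in particular the left-hand side is nonnegative. -/
theorem wallach_F13_sos (u v p q : ℂ) :
    (‖u * p‖) ^ 2 - (u ^ 2 * (starRingEnd ℂ p) ^ 2).re
      + (‖v * q‖) ^ 2 - (v ^ 2 * (starRingEnd ℂ q) ^ 2).re
      + (1 / 4) * ((‖u * q‖) ^ 2 + (‖v * p‖) ^ 2)
      - (5 / 2) * (u * (starRingEnd ℂ v) * (starRingEnd ℂ p) * q).re
      + 2 * (u * v * (starRingEnd ℂ p) * (starRingEnd ℂ q)).re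
    = 2 * ((u * (starRingEnd ℂ p)).im - (v * (starRingEnd ℂ q)).im) ^ 2
      + (1 / 4) * (‖u * q - v * p‖) ^ 2
    ∧ 0 ≤ (‖u * p‖) ^ 2 - (u ^ 2 * (starRingEnd ℂ p) ^ 2).re
      + (‖v * q‖) ^ 2 - (v ^ 2 * (starRingEnd ℂ q) ^ 2).re
      + (1 / 4) * ((‖u * q‖) ^ 2 + (‖v * p‖) ^ 2)
      - (5 / 2) * (u * (starRingEnd ℂ v) * (starRingEnd ℂ p) * q).re
      + 2 * (u * v * (starRingEnd ℂ p) * (starRingEnd ℂ q)).re := by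
  have h : (‖u * p‖) ^ 2 - (u ^ 2 * (starRingEnd ℂ p) ^ 2).re
      + (‖v * q‖) ^ 2 - (v ^ 2 * (starRingEnd ℂ q) ^ 2).re
      + (1 / 4) * ((‖u * q‖) ^ 2 + (‖v * p‖) ^ 2)
      - (5 / 2) * (u * (starRingEnd ℂ v) * (starRingEnd ℂ p) * q).re
      + 2 * (u * v * (starRingEnd ℂ p) * (starRingEnd ℂ q)).re
    = 2 * ((u * (starRingEnd ℂ p)).im - (v * (starRingEnd ℂ q)).im) ^ 2
      + (1 / 4) * (‖u * q - v * p‖) ^ 2 := by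
    simp only [Complex.sq_norm]
    simp only [pow_two, Complex.normSq_apply, Complex.mul_re, Complex.mul_im,
      Complex.sub_re, Complex.sub_im, Complex.conj_re, Complex.conj_im]
    ring
  refine ⟨h, h ▸ ?_⟩
  positivity
end

section
/- For all complex numbers u, v, p, q: |up|² − Re(u²·conj(p)²) + |vq|² − Re(v²·conj(q)²) + (1/4)(|uq|² + |vp|²) + 2·Re(u·conj(v)·conj(p)·q) − (5/2)·Re(u·v·conj(p)·conj(q)) = 2·(Im(u·conj(p)) + Im(v·conj(q)))² + (1/4)·|u·conj(q) − p·conj(v)|². In particular the left-hand side is nonnegative. -/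
open Complex

/-- Sum-of-squares identity for the terms `F₁₂`, `F₂₃` in the Riemannian sectional curvature of
the Wallach threefold; in particular the left-hand side is nonnegative. -/
theorem wallach_F12_sos (u v p q : ℂ) :
    (‖u * p‖) ^ 2 - (u ^ 2 * (starRingEnd ℂ p) ^ 2).re
      + (‖v * q‖) ^ 2 - (v ^ 2 * (starRingEnd ℂ q) ^ 2).re
      + (1 / 4) * ((‖u * q‖) ^ 2 + (‖v * p‖) ^ 2)
      + 2 * (u * (starRingEnd ℂ v) * (starRingEnd ℂ p) * q).re
      - (5 / 2) * (u * v * (starRingEnd ℂ p) * (starRingEnd ℂ q)).re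
    = 2 * ((u * (starRingEnd ℂ p)).im + (v * (starRingEnd ℂ q)).im) ^ 2
      + (1 / 4) * (‖u * (starRingEnd ℂ q) - p * (starRingEnd ℂ v)‖) ^ 2
    ∧ 0 ≤ (‖u * p‖) ^ 2 - (u ^ 2 * (starRingEnd ℂ p) ^ 2).re
      + (‖v * q‖) ^ 2 - (v ^ 2 * (starRingEnd ℂ q) ^ 2).re
      + (1 / 4) * ((‖u * q‖) ^ 2 + (‖v * p‖) ^ 2)
      + 2 * (u * (starRingEnd ℂ v) * (starRingEnd ℂ p) * q).re
      - (5 / 2) * (u * v * (starRingEnd ℂ p) * (starRingEnd ℂ q)).re := by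
  have h : (‖u * p‖) ^ 2 - (u ^ 2 * (starRingEnd ℂ p) ^ 2).re
      + (‖v * q‖) ^ 2 - (v ^ 2 * (starRingEnd ℂ q) ^ 2).re
      + (1 / 4) * ((‖u * q‖) ^ 2 + (‖v * p‖) ^ 2)
      + 2 * (u * (starRingEnd ℂ v) * (starRingEnd ℂ p) * q).re
      - (5 / 2) * (u * v * (starRingEnd ℂ p) * (starRingEnd ℂ q)).re
    = 2 * ((u * (starRingEnd ℂ p)).im + (v * (starRingEnd ℂ q)).im) ^ 2
      + (1 / 4) * (‖u * (starRingEnd ℂ q) - p * (starRingEnd ℂ v)‖) ^ 2 := by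
    simp only [Complex.sq_norm]
    simp only [pow_two, Complex.normSq_apply, Complex.mul_re, Complex.mul_im,
      Complex.sub_re, Complex.sub_im, Complex.conj_re, Complex.conj_im]
    ring
  refine ⟨h, ?_⟩
  rw [h]
  positivity
end

section
/- For X, Y ∈ ℂ³ define E(X,Y) = 4·Σ_{i=1}^{3}(|XᵢYᵢ|² − Re(Xᵢ²·conj(Yᵢ)²)) + (1/2)(|X₁Y₂|² + |X₂Y₁|²) + (1/2)(|X₂Y₃|² + |X₃Y₂|²) + (1/2)(|X₁Y₃|² + |X₃Y₁|²) + 4Re(X₁·conj(X₂)·conj(Y₁)·Y₂) − 5Re(X₁X₂·conj(Y₁)·conj(Y₂)) + 4Re(X₂·conj(X₃)·conj(Y₂)·Y₃) − 5Re(X₂X₃·conj(Y₂)·conj(Y₃)) − 5Re(X₁·conj(X₃)·conj(Y₁)·Y₃) + 4Re(X₁X₃·conj(Y₁)·conj(Y₃)). Then for all X, Y ∈ ℂ³, writing Iᵢ = Im(Xᵢ·conj(Yᵢ)), one has E(X,Y) = 4(I₁+I₂)² + 4(I₂+I₃)² + 4(I₁−I₃)² + (1/2)|X₁·conj(Y₂)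 − Y₁·conj(X₂)|² + (1/2)|X₂·conj(Y₃) − Y₂·conj(X₃)|² + (1/2)|X₁Y₃ − Y₁X₃|²; in particular E(X,Y) ≥ 0. -/
open Complex

/-- The Riemannian sectional curvature numerator `R_{xyyx}` of the Wallach threefold, in terms
of the `(1,0)`-parts `X, Y ∈ ℂ³` of `x = X + X̄`, `y = Y + Ȳ`. -/
noncomputable def wallachSectional (X Y : Fin 3 → ℂ) : ℝ :=
  4 * (∑ i : Fin 3, ((Norm.norm (X i * Y i)) ^ 2
        - (X i ^ 2 * (starRingEnd ℂ (Y i)) ^ 2).re))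
    + (1 / 2) * ((Norm.norm (X 0 * Y 1)) ^ 2 + (Norm.norm (X 1 * Y 0)) ^ 2)
    + (1 / 2) * ((Norm.norm (X 1 * Y 2)) ^ 2 + (Norm.norm (X 2 * Y 1)) ^ 2)
    + (1 / 2) * ((Norm.norm (X 0 * Y 2)) ^ 2 + (Norm.norm (X 2 * Y 0)) ^ 2)
    + 4 * (X 0 * (starRingEnd ℂ (X 1)) * (starRingEnd ℂ (Y 0)) * Y 1).re
    - 5 * (X 0 * X 1 * (starRingEnd ℂ (Y 0)) * (starRingEnd ℂ (Y 1))).re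
    + 4 * (X 1 * (starRingEnd ℂ (X 2)) * (starRingEnd ℂ (Y 1)) * Y 2).re
    - 5 * (X 1 * X 2 * (starRingEnd ℂ (Y 1)) * (starRingEnd ℂ (Y 2))).re
    - 5 * (X 0 * (starRingEnd ℂ (X 2)) * (starRingEnd ℂ (Y 0)) * Y 2).re
    + 4 * (X 0 * X 2 * (starRingEnd ℂ (Y 0)) * (starRingEnd ℂ (Y 2))).re

set_option maxHeartbeats 4000000 in
/-- Sum-of-squares identity for the Riemannian sectional curvature of the Wallach threefold;
in particular it is nonnegative. -/
theorem wallach_sectional_sos :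
    ∀ X Y : Fin 3 → ℂ,
      wallachSectional X Y
        = 4 * ((X 0 * (starRingEnd ℂ (Y 0))).im + (X 1 * (starRingEnd ℂ (Y 1))).im) ^ 2
          + 4 * ((X 1 * (starRingEnd ℂ (Y 1))).im + (X 2 * (starRingEnd ℂ (Y 2))).im) ^ 2
          + 4 * ((X 0 * (starRingEnd ℂ (Y 0))).im - (X 2 * (starRingEnd ℂ (Y 2))).im) ^ 2
          + (1 / 2) * (Norm.norm (X 0 * (starRingEnd ℂ (Y 1))
              - Y 0 * (starRingEnd ℂ (X 1)))) ^ 2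
          + (1 / 2) * (Norm.norm (X 1 * (starRingEnd ℂ (Y 2))
              - Y 1 * (starRingEnd ℂ (X 2)))) ^ 2
          + (1 / 2) * (Norm.norm (X 0 * Y 2 - Y 0 * X 2)) ^ 2
      ∧ 0 ≤ wallachSectional X Y := by
  intro X Y
  have key : wallachSectional X Y
        = 4 * ((X 0 * (starRingEnd ℂ (Y 0))).im + (X 1 * (starRingEnd ℂ (Y 1))).im) ^ 2
          + 4 * ((X 1 * (starRingEnd ℂ (Y 1))).im + (X 2 * (starRingEnd ℂ (Y 2))).im) ^ 2
          + 4 * ((X 0 * (starRingEnd ℂ (Y 0))).im - (X 2 * (starRingEnd ℂ (Y 2))).im) ^ 2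
          + (1 / 2) * (Norm.norm (X 0 * (starRingEnd ℂ (Y 1))
              - Y 0 * (starRingEnd ℂ (X 1)))) ^ 2
          + (1 / 2) * (Norm.norm (X 1 * (starRingEnd ℂ (Y 2))
              - Y 1 * (starRingEnd ℂ (X 2)))) ^ 2
          + (1 / 2) * (Norm.norm (X 0 * Y 2 - Y 0 * X 2)) ^ 2 := by
    simp only [wallachSectional, Fin.sum_univ_three, Complex.sq_norm, Complex.normSq_apply,
      Complex.mul_re, Complex.mul_im, Complex.sub_re, Complex.sub_im, Complex.conj_re,
      Complex.conj_im, Complex.add_re, Complex.add_im]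
    simp only [pow_two, Complex.mul_re, Complex.mul_im, Complex.conj_re, Complex.conj_im]
    ring
  refine ⟨key, ?_⟩
  rw [key]
  positivity
end

section
/- Let a > 0 be a real number, let s, t ∈ ℝ with (s,t) ≠ (0,0), and let 𝔤 be a complex Lie algebra admitting a basis (e₁, e₂, e₃, f₁, f₂, f₃) whose only nonzero brackets among basis vectors (up to antisymmetry) are: [e₁,e₃] = −is·e₁, [e₁,f₃] = −is·e₁, [f₁,f₃] = is·f₁, [f₁,e₃] = is·f₁, [e₂,e₃] = −it·e₂, [e₂,f₃] = −it·e₂, [f₂,f₃] = it·f₂, [f₂,e₃] = it·f₂, [e₁,f₁] = a·(e₃ − f₃), [e₂,f₂] = −a·(e₃ − f₃). Then 𝔤 is solvable of derived length exactly 3 (i.e. the derived series satisfies 𝔤⁽²⁾ ≠ 0 and 𝔤⁽³⁾ = 0), and 𝔤 is not nilpotent. -/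
open Complex

/-- The complexified Lie algebra `A_{s,t}` (the structure equations of the balanced BTP
Lie-Hermitian threefolds of middle type of the first family), for `(s,t) ≠ (0,0)`, is solvable
of derived length exactly 3 and is not nilpotent.  Here `e₁,e₂,e₃` correspond to `b 0, b 1, b 2`
and `fᵢ = conj(eᵢ)` to `b 3, b 4, b 5`; the listed hypotheses record all brackets among basis
vectors (up to antisymmetry), the unlisted pairs bracketing to zero. -/
theorem Ast_three_step_solvable (a s t : ℝ) (ha : 0 < a) (hst : (s, t) ≠ (0, 0))
    (L : Type*) [LieRing L] [LieAlgebra ℂ L] (b : Module.Basis (Fin 6) ℂ L)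
    (h01 : ⁅b 0, b 1⁆ = 0)
    (h02 : ⁅b 0, b 2⁆ = (-(Complex.I * (s : ℂ))) • b 0)
    (h03 : ⁅b 0, b 3⁆ = (a : ℂ) • (b 2 - b 5))
    (h04 : ⁅b 0, b 4⁆ = 0)
    (h05 : ⁅b 0, b 5⁆ = (-(Complex.I * (s : ℂ))) • b 0)
    (h12 : ⁅b 1, b 2⁆ = (-(Complex.I * (t : ℂ))) • b 1)
    (h13 : ⁅b 1, b 3⁆ = 0)
    (h14 : ⁅b 1, b 4⁆ = (-(a : ℂ)) • (b 2 - b 5))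
    (h15 : ⁅b 1, b 5⁆ = (-(Complex.I * (t : ℂ))) • b 1)
    (h23 : ⁅b 2, b 3⁆ = -((Complex.I * (s : ℂ)) • b 3))
    (h24 : ⁅b 2, b 4⁆ = -((Complex.I * (t : ℂ)) • b 4))
    (h25 : ⁅b 2, b 5⁆ = 0)
    (h34 : ⁅b 3, b 4⁆ = 0)
    (h35 : ⁅b 3, b 5⁆ = (Complex.I * (s : ℂ)) • b 3)
    (h45 : ⁅b 4, b 5⁆ = (Complex.I * (t : ℂ)) • b 4) :
    (LieAlgebra.derivedSeries ℂ L 2 ≠ ⊥ ∧ LieAlgebra.derivedSeries ℂ L 3 = ⊥)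
      ∧ ¬ LieRing.IsNilpotent L := by
  classical
  set z : L := b 2 - b 5 with hz
  -- reversed brackets
  have h10 : ⁅b 1, b 0⁆ = 0 := by rw [← lie_skew, h01, neg_zero]
  have h20 : ⁅b 2, b 0⁆ = (Complex.I * (s : ℂ)) • b 0 := by
    rw [← lie_skew, h02, neg_smul, neg_neg]
  have h30 : ⁅b 3, b 0⁆ = -((a : ℂ) • z) := by rw [← lie_skew, h03]
  have h40 : ⁅b 4, b 0⁆ = 0 := by rw [← lie_skew, h04, neg_zero]
  have h50 : ⁅b 5, b 0⁆ = (Complex.I * (s : ℂ)) • b 0 := by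
    rw [← lie_skew, h05, neg_smul, neg_neg]
  have h21 : ⁅b 2, b 1⁆ = (Complex.I * (t : ℂ)) • b 1 := by
    rw [← lie_skew, h12, neg_smul, neg_neg]
  have h31 : ⁅b 3, b 1⁆ = 0 := by rw [← lie_skew, h13, neg_zero]
  have h41 : ⁅b 4, b 1⁆ = (a : ℂ) • z := by rw [← lie_skew, h14, neg_smul, neg_neg]
  have h51 : ⁅b 5, b 1⁆ = (Complex.I * (t : ℂ)) • b 1 := by
    rw [← lie_skew, h15, neg_smul, neg_neg]
  have h32 : ⁅b 3, b 2⁆ = (Complex.I * (s : ℂ)) • b 3 := by rw [← lie_skew, h23, neg_neg]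
  have h42 : ⁅b 4, b 2⁆ = (Complex.I * (t : ℂ)) • b 4 := by rw [← lie_skew, h24, neg_neg]
  have h52 : ⁅b 5, b 2⁆ = 0 := by rw [← lie_skew, h25, neg_zero]
  have h43 : ⁅b 4, b 3⁆ = 0 := by rw [← lie_skew, h34, neg_zero]
  have h53 : ⁅b 5, b 3⁆ = -((Complex.I * (s : ℂ)) • b 3) := by rw [← lie_skew, h35]
  have h54 : ⁅b 5, b 4⁆ = -((Complex.I * (t : ℂ)) • b 4) := by rw [← lie_skew, h45]
  -- linearity helpers
  have key : ∀ (y : L) (p : Submodule ℂ L), (∀ i, ⁅b i, y⁆ ∈ p) → ∀ x : L, ⁅x, y⁆ ∈ p := by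
    intro y p hp x
    let f : L →ₗ[ℂ] L :=
      { toFun := fun x => ⁅x, y⁆
        map_add' := fun u v => add_lie u v y
        map_smul' := fun c u => smul_lie c u y }
    have hle : (⊤ : Submodule ℂ L) ≤ p.comap f := by
      rw [← b.span_eq]
      exact Submodule.span_le.2 (by rintro _ ⟨i, rfl⟩; exact hp i)
    exact hle trivial
  have key2 : ∀ (x : L) (p : Submodule ℂ L), (∀ j, ⁅x, b j⁆ ∈ p) → ∀ y : L, ⁅x, y⁆ ∈ p := by
    intro x p hp y
    let f : L →ₗ[ℂ] L :=
      { toFun := fun y => ⁅x, y⁆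
        map_add' := fun u v => lie_add x u v
        map_smul' := fun c u => lie_smul c x u }
    have hle : (⊤ : Submodule ℂ L) ≤ p.comap f := by
      rw [← b.span_eq]
      exact Submodule.span_le.2 (by rintro _ ⟨j, rfl⟩; exact hp j)
    exact hle trivial
  -- z is central
  have hcen : ∀ x : L, ⁅x, z⁆ = 0 := by
    intro x
    refine (Submodule.mem_bot ℂ).1 (key z ⊥ (fun i => (Submodule.mem_bot ℂ).2 ?_) x)
    fin_cases i <;>
      simp only [Fin.zero_eta, Fin.mk_one, Fin.reduceFinMk, hz, lie_sub, h02, h05, h12, h15, h25, h32, h35, h42, h45, h52, lie_self,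
        sub_self, sub_zero, zero_sub, neg_zero]
  have hcen' : ∀ x : L, ⁅z, x⁆ = 0 := fun x => by rw [← lie_skew, hcen, neg_zero]
  -- the ideal I
  set p : Submodule ℂ L := Submodule.span ℂ {b 0, b 1, b 3, b 4, z} with hp
  have hb0p : b 0 ∈ p := Submodule.subset_span (by simp)
  have hb1p : b 1 ∈ p := Submodule.subset_span (by simp)
  have hb3p : b 3 ∈ p := Submodule.subset_span (by simp)
  have hb4p : b 4 ∈ p := Submodule.subset_span (by simp)
  have hzp : z ∈ p := Submodule.subset_span (by simp)
  have hbb : ∀ i j : Fin 6, ⁅b i, b j⁆ ∈ p := by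
    intro i j
    fin_cases i <;> fin_cases j <;>
      simp only [Fin.zero_eta, Fin.mk_one, Fin.reduceFinMk, lie_self, h01, h02, h03, h04, h05, h12, h13, h14, h15, h23, h24, h25, h34,
        h35, h45, h10, h20, h30, h40, h50, h21, h31, h41, h51, h32, h42, h52, h43, h53, h54] <;>
      first
      | exact p.zero_mem
      | exact p.smul_mem _ hb0p
      | exact p.smul_mem _ hb1p
      | exact p.smul_mem _ hb3p
      | exact p.smul_mem _ hb4p
      | exact p.smul_mem _ hzp
      | exact p.neg_mem (p.smul_mem _ hb0p)
      | exact p.neg_mem (p.smul_mem _ hb1p)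
      | exact p.neg_mem (p.smul_mem _ hb3p)
      | exact p.neg_mem (p.smul_mem _ hb4p)
      | exact p.neg_mem (p.smul_mem _ hzp)
  have hxyp : ∀ x y : L, ⁅x, y⁆ ∈ p :=
    fun x y => key2 x p (fun j => key (b j) p (fun i => hbb i j) x) y
  let I : LieIdeal ℂ L := { p with lie_mem := fun {x m} _ => hxyp x m }
  -- the ideal J = span z
  set q : Submodule ℂ L := Submodule.span ℂ {z} with hq
  have hzq : z ∈ q := Submodule.mem_span_singleton_self z
  let J : LieIdeal ℂ L :=
    { q with
      lie_mem := fun {x m} hm => by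
        obtain ⟨c, rfl⟩ := Submodule.mem_span_singleton.1 hm
        rw [lie_smul, hcen, smul_zero]; exact q.zero_mem }
  have hmemI : ∀ x : L, x ∈ I ↔ x ∈ p := fun x => Iff.rfl
  have hmemJ : ∀ x : L, x ∈ J ↔ x ∈ q := fun x => Iff.rfl
  -- derived series descriptions
  have e1 : LieAlgebra.derivedSeries ℂ L 1 = ⁅(⊤ : LieIdeal ℂ L), ⊤⁆ := by
    rw [LieAlgebra.derivedSeries_def, LieAlgebra.derivedSeriesOfIdeal_succ,
      LieAlgebra.derivedSeriesOfIdeal_zero]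
  have e2 : LieAlgebra.derivedSeries ℂ L 2
      = ⁅LieAlgebra.derivedSeries ℂ L 1, LieAlgebra.derivedSeries ℂ L 1⁆ := by
    rw [LieAlgebra.derivedSeries_def, LieAlgebra.derivedSeriesOfIdeal_succ,
      ← LieAlgebra.derivedSeries_def]
  have e3 : LieAlgebra.derivedSeries ℂ L 3
      = ⁅LieAlgebra.derivedSeries ℂ L 2, LieAlgebra.derivedSeries ℂ L 2⁆ := by
    rw [LieAlgebra.derivedSeries_def, LieAlgebra.derivedSeriesOfIdeal_succ,
      ← LieAlgebra.derivedSeries_def]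
  have hD1I : LieAlgebra.derivedSeries ℂ L 1 ≤ I := by
    rw [e1, LieSubmodule.lie_le_iff]
    intro x _ m _
    exact hxyp x m
  -- brackets of elements of I lie in J
  have hIIJ : ∀ x ∈ p, ∀ y ∈ p, ⁅x, y⁆ ∈ q := by
    intro x hx
    induction hx using Submodule.span_induction with
    | mem g hg =>
      intro y hy
      induction hy using Submodule.span_induction with
      | mem g' hg' =>
        simp only [Set.mem_insert_iff, Set.mem_singleton_iff] at hg hg'
        rcases hg with rfl | rfl | rfl | rfl | rfl <;>
          rcases hg' with rfl | rfl | rfl | rfl | rfl <;>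
          simp only [lie_self, h01, h03, h04, h13, h14, h34, h10, h30, h40, h31, h41, h43,
            hcen, hcen'] <;>
          first
          | exact q.zero_mem
          | exact q.smul_mem _ hzq
          | exact q.neg_mem (q.smul_mem _ hzq)
      | zero => rw [lie_zero]; exact q.zero_mem
      | add u v _ _ hu hv => rw [lie_add]; exact q.add_mem hu hv
      | smul c u _ hu => rw [lie_smul]; exact q.smul_mem c hu
    | zero => intro y _; rw [zero_lie]; exact q.zero_mem
    | add u v _ _ hu hv => intro y hy; rw [add_lie]; exact q.add_mem (hu y hy) (hv y hy)
    | smul c u _ hu => intro y hy; rw [smul_lie]; exact q.smul_mem c (hu y hy)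
  have hD2J : LieAlgebra.derivedSeries ℂ L 2 ≤ J := by
    rw [e2]
    refine le_trans (LieSubmodule.mono_lie hD1I hD1I) ?_
    rw [LieSubmodule.lie_le_iff]
    intro x hx m hm
    exact hIIJ x hx m hm
  -- D3 = ⊥
  have hD3 : LieAlgebra.derivedSeries ℂ L 3 = ⊥ := by
    rw [e3, eq_bot_iff]
    refine le_trans (LieSubmodule.mono_lie hD2J hD2J) ?_
    rw [LieSubmodule.lie_le_iff]
    intro x _ m hm
    obtain ⟨c, rfl⟩ := Submodule.mem_span_singleton.1 ((hmemJ m).1 hm)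
    rw [LieSubmodule.mem_bot, lie_smul, hcen, smul_zero]
  -- key nonvanishing data
  have hst' : s ≠ 0 ∨ t ≠ 0 := by
    by_contra h
    push_neg at h
    exact hst (by simp [h.1, h.2])
  have hane : (a : ℂ) ≠ 0 := Complex.ofReal_ne_zero.2 ha.ne'
  obtain ⟨u, v, c, d, hu0, hc, hd, hub2, hvb5, huv⟩ :
      ∃ (u v : L) (c d : ℂ), u ≠ 0 ∧ c ≠ 0 ∧ d ≠ 0 ∧
        ⁅u, b 2⁆ = c • u ∧ ⁅v, b 5⁆ = (-c) • v ∧ ⁅u, v⁆ = d • z := by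
    rcases hst' with hs | ht
    · refine ⟨b 0, b 3, -(Complex.I * (s : ℂ)), (a : ℂ), b.ne_zero 0, ?_, hane, h02, ?_, h03⟩
      · exact neg_ne_zero.2 (mul_ne_zero Complex.I_ne_zero (Complex.ofReal_ne_zero.2 hs))
      · rw [h35, neg_neg]
    · refine ⟨b 1, b 4, -(Complex.I * (t : ℂ)), -(a : ℂ), b.ne_zero 1, ?_, neg_ne_zero.2 hane,
        h12, ?_, h14⟩
      · exact neg_ne_zero.2 (mul_ne_zero Complex.I_ne_zero (Complex.ofReal_ne_zero.2 ht))
      · rw [h45, neg_neg]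
  -- u, v ∈ D1
  have huD1 : u ∈ LieAlgebra.derivedSeries ℂ L 1 := by
    have h1 : ⁅u, b 2⁆ ∈ LieAlgebra.derivedSeries ℂ L 1 := by
      rw [e1]; exact LieSubmodule.lie_mem_lie (LieSubmodule.mem_top u) (LieSubmodule.mem_top _)
    have heq : u = c⁻¹ • ⁅u, b 2⁆ := by
      rw [hub2, smul_smul, inv_mul_cancel₀ hc, one_smul]
    rw [heq]
    exact (LieAlgebra.derivedSeries ℂ L 1).smul_mem _ h1
  have hvD1 : v ∈ LieAlgebra.derivedSeries ℂ L 1 := by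
    have h1 : ⁅v, b 5⁆ ∈ LieAlgebra.derivedSeries ℂ L 1 := by
      rw [e1]; exact LieSubmodule.lie_mem_lie (LieSubmodule.mem_top v) (LieSubmodule.mem_top _)
    have heq : v = (-c)⁻¹ • ⁅v, b 5⁆ := by
      rw [hvb5, smul_smul, inv_mul_cancel₀ (neg_ne_zero.2 hc), one_smul]
    rw [heq]
    exact (LieAlgebra.derivedSeries ℂ L 1).smul_mem _ h1
  -- z ∈ D2
  have hzD2 : z ∈ LieAlgebra.derivedSeries ℂ L 2 := by
    have h1 : ⁅u, v⁆ ∈ LieAlgebra.derivedSeries ℂ L 2 := by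
      rw [e2]; exact LieSubmodule.lie_mem_lie huD1 hvD1
    have heq : z = d⁻¹ • ⁅u, v⁆ := by
      rw [huv, smul_smul, inv_mul_cancel₀ hd, one_smul]
    rw [heq]
    exact (LieAlgebra.derivedSeries ℂ L 2).smul_mem _ h1
  have hzne : z ≠ 0 := by
    intro h
    have h2 : b.repr z 2 = 0 := by rw [h]; simp
    rw [hz] at h2
    simp [Module.Basis.repr_self, Finsupp.single_apply] at h2
  constructor
  · constructor
    · intro h
      rw [h, LieSubmodule.mem_bot] at hzD2
      exact hzne hzD2
    · exact hD3
  · intro hnil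
    obtain ⟨k, hk⟩ := (LieModule.isNilpotent_iff ℂ L L).mp hnil
    have hulcs : ∀ n, u ∈ LieModule.lowerCentralSeries ℂ L L n := by
      intro n
      induction n with
      | zero => rw [LieModule.lowerCentralSeries_zero]; exact LieSubmodule.mem_top u
      | succ n ih =>
        rw [LieModule.lowerCentralSeries_succ]
        have hb2u : ⁅b 2, u⁆ = (-c) • u := by rw [← lie_skew, hub2, neg_smul]
        have h1 : ⁅b 2, u⁆ ∈ ⁅(⊤ : LieIdeal ℂ L), LieModule.lowerCentralSeries ℂ L L n⁆ :=
          LieSubmodule.lie_mem_lie (LieSubmodule.mem_top _) ih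
        have heq : u = (-c)⁻¹ • ⁅b 2, u⁆ := by
          rw [hb2u, smul_smul, inv_mul_cancel₀ (neg_ne_zero.2 hc), one_smul]
        rw [heq]
        exact (⁅(⊤ : LieIdeal ℂ L), LieModule.lowerCentralSeries ℂ L L n⁆ : LieSubmodule ℂ L L).smul_mem _ h1
    have := hulcs k
    rw [hk, LieSubmodule.mem_bot] at this
    exact hu0 this
end

section
/- Let a > 0 be real, let z ∈ ℂ and t ∈ ℝ with (z,t) ≠ (0,0), and let 𝔤 be a complex Lie algebra admitting a basis (e₁, e₂, e₃, f₁, f₂, f₃) whose only nonzero brackets among basis vectors (up to antisymmetry) are: [e₁,e₂] = z·e₂, [f₁,f₂] = conj(z)·f₂, [e₂,e₃] = −it·e₂, [f₂,f₃] = it·f₂, [e₂,f₃] = −it·e₂, [f₂,e₃] = it·f₂, [e₂,f₁] = conj(z)·e₂, [f₂,e₁] = z·f₂, [e₁,f₁] = a·(e₃ − f₃), [e₂,f₂] = −a·(e₃ − f₃). Then 𝔤 is solvable of derived length exactly 3 (the derived series satisfies 𝔤⁽²⁾ ≠ 0 and 𝔤⁽³⁾ = 0), and 𝔤 is not nilpotent.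 -/
open Complex

/-- The complexified Lie algebra `B_{z,t}` (the second family of balanced BTP Lie-Hermitian
threefolds of middle type), for `(z,t) ≠ (0,0)`, is solvable of derived length exactly 3 and
is not nilpotent.  Here `e₁,e₂,e₃` correspond to `b 0, b 1, b 2` and `fᵢ = conj(eᵢ)` to
`b 3, b 4, b 5`; the listed hypotheses record all brackets among basis vectors (up to
antisymmetry), the unlisted pairs bracketing to zero. -/
theorem Bzt_three_step_solvable (a : ℝ) (ha : 0 < a) (z : ℂ) (t : ℝ) (hzt : (z, t) ≠ (0, 0))
    (L : Type*) [LieRing L] [LieAlgebra ℂ L] (b : Module.Basis (Fin 6) ℂ L)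
    (h01 : ⁅b 0, b 1⁆ = z • b 1)
    (h02 : ⁅b 0, b 2⁆ = 0)
    (h03 : ⁅b 0, b 3⁆ = (a : ℂ) • (b 2 - b 5))
    (h04 : ⁅b 0, b 4⁆ = -(z • b 4))
    (h05 : ⁅b 0, b 5⁆ = 0)
    (h12 : ⁅b 1, b 2⁆ = (-(Complex.I * (t : ℂ))) • b 1)
    (h13 : ⁅b 1, b 3⁆ = (starRingEnd ℂ z) • b 1)
    (h14 : ⁅b 1, b 4⁆ = (-(a : ℂ)) • (b 2 - b 5))
    (h15 : ⁅b 1, b 5⁆ = (-(Complex.I * (t : ℂ))) • b 1)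
    (h23 : ⁅b 2, b 3⁆ = 0)
    (h24 : ⁅b 2, b 4⁆ = -((Complex.I * (t : ℂ)) • b 4))
    (h25 : ⁅b 2, b 5⁆ = 0)
    (h34 : ⁅b 3, b 4⁆ = (starRingEnd ℂ z) • b 4)
    (h35 : ⁅b 3, b 5⁆ = 0)
    (h45 : ⁅b 4, b 5⁆ = (Complex.I * (t : ℂ)) • b 4) :
    (LieAlgebra.derivedSeries ℂ L 2 ≠ ⊥ ∧ LieAlgebra.derivedSeries ℂ L 3 = ⊥)
      ∧ ¬ LieRing.IsNilpotent L := by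
  have haC : (a : ℂ) ≠ 0 := by exact_mod_cast ne_of_gt ha
  set S1 : Submodule ℂ L := Submodule.span ℂ ({b 1, b 4, b 2 - b 5} : Set L) with hS1
  set S2 : Submodule ℂ L := Submodule.span ℂ ({b 2 - b 5} : Set L) with hS2
  have m1 : b 1 ∈ S1 := Submodule.subset_span (by simp)
  have m4 : b 4 ∈ S1 := Submodule.subset_span (by simp)
  have mv : b 2 - b 5 ∈ S1 := Submodule.subset_span (by simp)
  have mv2 : b 2 - b 5 ∈ S2 := Submodule.subset_span (by simp)
  have mem_of_eq : ∀ {x y : L}, x = y → y ∈ S1 → x ∈ S1 := fun h hm => h ▸ hm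
  -- all brackets of basis vectors lie in S1
  have key : ∀ i j : Fin 6, ⁅b i, b j⁆ ∈ S1 := by
    have tri : ∀ i j : Fin 6, i ≤ j → ⁅b i, b j⁆ ∈ S1 := by
      intro i j hij
      fin_cases i <;> fin_cases j <;>
        first
          | exact mem_of_eq (lie_self _) (zero_mem _)
          | exact mem_of_eq h01 (Submodule.smul_mem _ _ m1)
          | exact mem_of_eq h02 (zero_mem _)
          | exact mem_of_eq h03 (Submodule.smul_mem _ _ mv)
          | exact mem_of_eq h04 (Submodule.neg_mem _ (Submodule.smul_mem _ _ m4))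
          | exact mem_of_eq h05 (zero_mem _)
          | exact mem_of_eq h12 (Submodule.smul_mem _ _ m1)
          | exact mem_of_eq h13 (Submodule.smul_mem _ _ m1)
          | exact mem_of_eq h14 (Submodule.smul_mem _ _ mv)
          | exact mem_of_eq h15 (Submodule.smul_mem _ _ m1)
          | exact mem_of_eq h23 (zero_mem _)
          | exact mem_of_eq h24 (Submodule.neg_mem _ (Submodule.smul_mem _ _ m4))
          | exact mem_of_eq h25 (zero_mem _)
          | exact mem_of_eq h34 (Submodule.smul_mem _ _ m4)
          | exact mem_of_eq h35 (zero_mem _)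
          | exact mem_of_eq h45 (Submodule.smul_mem _ _ m4)
          | exact absurd hij (by decide)
    intro i j
    rcases le_total i j with h | h
    · exact tri i j h
    · rw [(lie_skew (b i) (b j)).symm]
      exact Submodule.neg_mem _ (tri j i h)
  -- the vector v := b 2 - b 5 is central
  have g32 : ⁅b 3, b 2⁆ = 0 := by
    rw [(lie_skew (b 3) (b 2)).symm, h23, neg_zero]
  have g42 : ⁅b 4, b 2⁆ = (Complex.I * (t : ℂ)) • b 4 := by
    rw [(lie_skew (b 4) (b 2)).symm, h24, neg_neg]
  have g52 : ⁅b 5, b 2⁆ = 0 := by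
    rw [(lie_skew (b 5) (b 2)).symm, h25, neg_zero]
  have hv0b : ∀ i : Fin 6, ⁅b i, b 2 - b 5⁆ = 0 := by
    have c0 : ⁅b 0, b 2 - b 5⁆ = 0 := by rw [lie_sub, h02, h05, sub_zero]
    have c1 : ⁅b 1, b 2 - b 5⁆ = 0 := by rw [lie_sub, h12, h15, sub_self]
    have c2 : ⁅b 2, b 2 - b 5⁆ = 0 := by rw [lie_sub, lie_self, h25, sub_zero]
    have c3 : ⁅b 3, b 2 - b 5⁆ = 0 := by rw [lie_sub, g32, h35, sub_zero]
    have c4 : ⁅b 4, b 2 - b 5⁆ = 0 := by rw [lie_sub, g42, h45, sub_self]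
    have c5 : ⁅b 5, b 2 - b 5⁆ = 0 := by rw [lie_sub, g52, lie_self, sub_zero]
    intro i
    fin_cases i <;>
      first | exact c0 | exact c1 | exact c2 | exact c3 | exact c4 | exact c5
  have hadv : LieAlgebra.ad ℂ L (b 2 - b 5) = 0 := b.ext fun i => by
    rw [LieAlgebra.ad_apply, LinearMap.zero_apply, ← lie_skew, hv0b i, neg_zero]
  have hv0' : ∀ x : L, ⁅b 2 - b 5, x⁆ = 0 := by
    intro x
    have h1 : ⁅b 2 - b 5, x⁆ = LieAlgebra.ad ℂ L (b 2 - b 5) x := rfl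
    rw [h1, hadv, LinearMap.zero_apply]
  have hv0 : ∀ x : L, ⁅x, b 2 - b 5⁆ = 0 := by
    intro x
    rw [(lie_skew x (b 2 - b 5)).symm, hv0' x, neg_zero]
  -- linearity helper
  have himgS : ∀ (s : Set L) (S' : Submodule ℂ L) (f : L →ₗ[ℂ] L),
      (∀ y ∈ s, f y ∈ S') → ∀ x ∈ Submodule.span ℂ s, f x ∈ S' := by
    intro s S' f hf x hx
    have h1 : Submodule.map f (Submodule.span ℂ s) ≤ S' := by
      rw [Submodule.map_span, Submodule.span_le]
      rintro _ ⟨y, hy, rfl⟩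
      exact hf y hy
    exact h1 ⟨x, hx, rfl⟩
  have hspanTop : ∀ x : L, x ∈ Submodule.span ℂ (Set.range b) := by
    rw [b.span_eq]; exact fun x => trivial
  -- every bracket lies in S1
  have hrow : ∀ (j : Fin 6) (x : L), ⁅b j, x⁆ ∈ S1 := by
    intro j x
    have h1 := himgS (Set.range b) S1 (LieAlgebra.ad ℂ L (b j))
      (by rintro _ ⟨i, rfl⟩; rw [LieAlgebra.ad_apply]; exact key j i) x (hspanTop x)
    rwa [LieAlgebra.ad_apply] at h1
  have hall : ∀ x m : L, ⁅x, m⁆ ∈ S1 := by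
    intro x m
    have h1 : (-(LieAlgebra.ad ℂ L x)) m ∈ S1 := by
      refine himgS (Set.range b) S1 (-(LieAlgebra.ad ℂ L x)) ?_ m (hspanTop m)
      rintro _ ⟨i, rfl⟩
      rw [LinearMap.neg_apply, LieAlgebra.ad_apply, lie_skew]
      exact hrow i x
    have h2 := Submodule.neg_mem _ h1
    rwa [LinearMap.neg_apply, LieAlgebra.ad_apply, neg_neg] at h2
  -- brackets among S1 generators lie in S2
  have g41 : ⁅b 4, b 1⁆ = (a : ℂ) • (b 2 - b 5) := by
    rw [(lie_skew (b 4) (b 1)).symm, h14, neg_smul, neg_neg]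
  have hgen : ∀ g ∈ ({b 1, b 4, b 2 - b 5} : Set L),
      ∀ y ∈ ({b 1, b 4, b 2 - b 5} : Set L), ⁅g, y⁆ ∈ S2 := by
    intro g hg y hy
    simp only [Set.mem_insert_iff, Set.mem_singleton_iff] at hg hy
    rcases hg with rfl | rfl | rfl <;> rcases hy with rfl | rfl | rfl <;>
      first
        | (rw [lie_self]; exact zero_mem _)
        | (rw [hv0' _]; exact zero_mem _)
        | (rw [hv0 _]; exact zero_mem _)
        | (rw [h14]; exact Submodule.smul_mem _ _ mv2)
        | (rw [g41]; exact Submodule.smul_mem _ _ mv2)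
  have step1 : ∀ g ∈ ({b 1, b 4, b 2 - b 5} : Set L), ∀ x ∈ S1, ⁅x, g⁆ ∈ S2 := by
    intro g hg x hx
    have h1 : (-(LieAlgebra.ad ℂ L g)) x ∈ S2 := by
      refine himgS ({b 1, b 4, b 2 - b 5} : Set L) S2 (-(LieAlgebra.ad ℂ L g)) ?_ x hx
      intro y hy
      rw [LinearMap.neg_apply, LieAlgebra.ad_apply]
      exact Submodule.neg_mem _ (hgen g hg y hy)
    have h2 := Submodule.neg_mem _ h1
    rw [LinearMap.neg_apply, LieAlgebra.ad_apply, neg_neg] at h2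
    rw [(lie_skew x g).symm]
    exact Submodule.neg_mem _ h2
  have step2 : ∀ x ∈ S1, ∀ m ∈ S1, ⁅x, m⁆ ∈ S2 := by
    intro x hx m hm
    have h1 := himgS ({b 1, b 4, b 2 - b 5} : Set L) S2 (LieAlgebra.ad ℂ L x)
      (fun y hy => by rw [LieAlgebra.ad_apply]; exact step1 y hy x hx) m hm
    rwa [LieAlgebra.ad_apply] at h1
  -- brackets with S2 vanish
  have hS2lie : ∀ (x m : L), m ∈ S2 → ⁅x, m⁆ = 0 := by
    intro x m hm
    obtain ⟨c, rfl⟩ := Submodule.mem_span_singleton.mp hm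
    rw [lie_smul, hv0 x, smul_zero]
  -- Lie ideals
  let I1 : LieIdeal ℂ L := { S1 with lie_mem := fun {x m} _ => hall x m }
  let I2 : LieIdeal ℂ L :=
    { S2 with lie_mem := fun {x m} hm => (hS2lie x m hm).symm ▸ S2.zero_mem }
  -- derived series identities
  have e1 : LieAlgebra.derivedSeries ℂ L 1 = ⁅(⊤ : LieIdeal ℂ L), (⊤ : LieIdeal ℂ L)⁆ :=
    LieAlgebra.derivedSeriesOfIdeal_succ ℂ L ⊤ 0
  have e2 : LieAlgebra.derivedSeries ℂ L 2
      = ⁅LieAlgebra.derivedSeries ℂ L 1, LieAlgebra.derivedSeries ℂ L 1⁆ :=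
    LieAlgebra.derivedSeriesOfIdeal_succ ℂ L ⊤ 1
  have e3 : LieAlgebra.derivedSeries ℂ L 3
      = ⁅LieAlgebra.derivedSeries ℂ L 2, LieAlgebra.derivedSeries ℂ L 2⁆ :=
    LieAlgebra.derivedSeriesOfIdeal_succ ℂ L ⊤ 2
  have hD1le : LieAlgebra.derivedSeries ℂ L 1 ≤ I1 := by
    rw [e1, LieSubmodule.lie_le_iff]
    exact fun x _ m _ => hall x m
  have hD1le' : ∀ x ∈ LieAlgebra.derivedSeries ℂ L 1, x ∈ S1 := fun x hx => hD1le hx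
  have hD2le : ∀ m ∈ LieAlgebra.derivedSeries ℂ L 2, m ∈ S2 := by
    have h1 : LieAlgebra.derivedSeries ℂ L 2 ≤ I2 := by
      rw [e2, LieSubmodule.lie_le_iff]
      exact fun x hx m hm => step2 x (hD1le' x hx) m (hD1le' m hm)
    exact fun m hm => h1 hm
  have hD3 : LieAlgebra.derivedSeries ℂ L 3 = ⊥ := by
    rw [e3, eq_bot_iff, LieSubmodule.lie_le_iff]
    intro x _ m hm
    rw [hS2lie x m (hD2le m hm)]
    exact LieSubmodule.zero_mem _
  -- nonzero coefficient
  have hzc : z ≠ 0 ∨ (-(Complex.I * (t : ℂ))) ≠ 0 := by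
    by_contra h
    push_neg at h
    obtain ⟨h1, h2⟩ := h
    rw [neg_eq_zero, mul_eq_zero] at h2
    have ht : (t : ℂ) = 0 := h2.resolve_left Complex.I_ne_zero
    exact hzt (by simp [h1, Complex.ofReal_eq_zero.mp ht])
  have htop : ∀ x : L, x ∈ (⊤ : LieIdeal ℂ L) := fun x => trivial
  have hb1 : b 1 ∈ LieAlgebra.derivedSeries ℂ L 1 := by
    rw [e1]
    rcases hzc with hz | ht
    · have h1 : ⁅b 0, b 1⁆ ∈ ⁅(⊤ : LieIdeal ℂ L), (⊤ : LieIdeal ℂ L)⁆ :=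
        LieSubmodule.lie_mem_lie (htop _) (htop _)
      rw [h01] at h1
      have h2 := SMulMemClass.smul_mem z⁻¹ h1
      rwa [inv_smul_smul₀ hz] at h2
    · have h1 : ⁅b 1, b 2⁆ ∈ ⁅(⊤ : LieIdeal ℂ L), (⊤ : LieIdeal ℂ L)⁆ :=
        LieSubmodule.lie_mem_lie (htop _) (htop _)
      rw [h12] at h1
      have h2 := SMulMemClass.smul_mem (-(Complex.I * (t : ℂ)))⁻¹ h1
      rwa [inv_smul_smul₀ ht] at h2
  have hb4 : b 4 ∈ LieAlgebra.derivedSeries ℂ L 1 := by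
    rw [e1]
    rcases hzc with hz | ht
    · have h1 : ⁅b 0, b 4⁆ ∈ ⁅(⊤ : LieIdeal ℂ L), (⊤ : LieIdeal ℂ L)⁆ :=
        LieSubmodule.lie_mem_lie (htop _) (htop _)
      rw [h04] at h1
      have h2 := neg_mem h1
      rw [neg_neg] at h2
      have h3 := SMulMemClass.smul_mem z⁻¹ h2
      rwa [inv_smul_smul₀ hz] at h3
    · have h1 : ⁅b 4, b 5⁆ ∈ ⁅(⊤ : LieIdeal ℂ L), (⊤ : LieIdeal ℂ L)⁆ :=
        LieSubmodule.lie_mem_lie (htop _) (htop _)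
      rw [h45] at h1
      have h2 := neg_mem h1
      rw [← neg_smul] at h2
      have h3 := SMulMemClass.smul_mem (-(Complex.I * (t : ℂ)))⁻¹ h2
      rwa [inv_smul_smul₀ ht] at h3
  have hvD2 : b 2 - b 5 ∈ LieAlgebra.derivedSeries ℂ L 2 := by
    rw [e2]
    have h1 : ⁅b 1, b 4⁆ ∈ ⁅LieAlgebra.derivedSeries ℂ L 1, LieAlgebra.derivedSeries ℂ L 1⁆ :=
      LieSubmodule.lie_mem_lie hb1 hb4
    rw [h14] at h1
    have h2 := SMulMemClass.smul_mem (-(a : ℂ))⁻¹ h1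
    rwa [inv_smul_smul₀ (neg_ne_zero.mpr haC)] at h2
  have hvne : b 2 - b 5 ≠ 0 := sub_ne_zero_of_ne (b.injective.ne (by decide))
  have hD2ne : LieAlgebra.derivedSeries ℂ L 2 ≠ ⊥ := by
    intro h
    rw [h, LieSubmodule.mem_bot] at hvD2
    exact hvne hvD2
  -- non-nilpotency
  have noNil : ∀ (x w : L) (c : ℂ), ⁅x, w⁆ = c • w → c ≠ 0 → w ≠ 0 →
      ¬ LieRing.IsNilpotent L := by
    intro x w c hb' hc hw hnil
    have hpow : ∀ n : ℕ, ((LieModule.toEnd ℂ L L x) ^ n) w = c ^ n • w := by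
      intro n
      induction n with
      | zero => simp
      | succ n ih =>
        rw [pow_succ, Module.End.mul_apply]
        have hx : (LieModule.toEnd ℂ L L x) w = c • w := hb'
        rw [hx, map_smul, ih, smul_smul, ← pow_succ']
    obtain ⟨n, hn⟩ := LieModule.isNilpotent_toEnd_of_isNilpotent ℂ L L x
    have h1 := hpow n
    rw [hn] at h1
    simp only [LinearMap.zero_apply] at h1
    exact hw ((smul_eq_zero.mp h1.symm).resolve_left (pow_ne_zero n hc))
  refine ⟨⟨hD2ne, hD3⟩, ?_⟩
  rcases hzc with hz | ht
  · exact noNil (b 0) (b 1) z h01 hz (b.ne_zero 1)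
  · have h24' : ⁅b 2, b 4⁆ = (-(Complex.I * (t : ℂ))) • b 4 := by rw [h24, neg_smul]
    exact noNil (b 2) (b 4) (-(Complex.I * (t : ℂ))) h24' ht (b.ne_zero 4)
end
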